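/- The characters I_{m,m}(t,y) = t^m(χ_m(y) - tχ_{m-1}(y)) for m ≥ 0 and I_{m,n}(t,y) = t^m[(1+t^2)χ_n(y) - t(χ_{n+1}(y)+χ_{n-1}(y))] for m > n ≥ 0 are invariant under y ↦ 1/y, and the family {I_{m,m} : m ≥ 0} ∪ {I_{m,n} : m > n ≥ 0} is linearly independent over ℚ in the ring of Laurent polynomials in t and y. -/

import Mathlib

open Finset LaurentPolynomial

/-- The su(2) character `χ_n(y)` over a field, with `χ_n = 0` for `n < 0`. -/
noncomputable def chi {K : Type*} [Field K] (n : ℤ) (y : K) : K :=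
  if n < 0 then 0 else ∑ j ∈ Finset.range (n.toNat + 1), y ^ (n - 2 * (j : ℤ))

/-- Half-BPS character `I_{m,m}(t,y) = t^m (χ_m(y) - t χ_{m-1}(y))`. -/
noncomputable def Imm {K : Type*} [Field K] (m : ℕ) (t y : K) : K :=
  t ^ m * (chi (m : ℤ) y - t * chi ((m : ℤ) - 1) y)

/-- 1/4-BPS character
`I_{m,n}(t,y) = t^m [(1+t²) χ_n(y) - t (χ_{n+1}(y) + χ_{n-1}(y))]`. -/
noncomputable def Imn {K : Type*} [Field K] (m n : ℕ) (t y : K) : K :=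
  t ^ m * ((1 + t ^ 2) * chi (n : ℤ) y
    - t * (chi ((n : ℤ) + 1) y + chi ((n : ℤ) - 1) y))

/-- Laurent polynomials in two variables `t` (outer) and `y` (inner),
over `ℚ`. -/
abbrev A : Type := LaurentPolynomial (LaurentPolynomial ℚ)

/-- The su(2) character `χ_n(y)` as a Laurent polynomial in `y`. -/
noncomputable def chiB (n : ℤ) : LaurentPolynomial ℚ :=
  if n < 0 then 0
  else ∑ j ∈ Finset.range (n.toNat + 1), T (n - 2 * (j : ℤ))

/-- `I_{m,m}(t,y)` as a (Laurent) polynomial in `t` and `y`. -/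
noncomputable def ImmL (m : ℕ) : A :=
  T (m : ℤ) * (LaurentPolynomial.C (chiB (m : ℤ))
    - T 1 * LaurentPolynomial.C (chiB ((m : ℤ) - 1)))

/-- `I_{m,n}(t,y)` as a (Laurent) polynomial in `t` and `y`. -/
noncomputable def ImnL (m n : ℕ) : A :=
  T (m : ℤ) * ((1 + T 2) * LaurentPolynomial.C (chiB (n : ℤ))
    - T 1 * LaurentPolynomial.C (chiB ((n : ℤ) + 1) + chiB ((n : ℤ) - 1)))


lemma chi_inv {K : Type*} [Field K] (y : K) (n : ℤ) : chi n y⁻¹ = chi n y := by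
  unfold chi
  split_ifs with h
  · rfl
  · push_neg at h
    have hN : (n.toNat : ℤ) = n := Int.toNat_of_nonneg h
    conv_rhs => rw [← Finset.sum_range_reflect]
    refine Finset.sum_congr rfl fun j hj => ?_
    rw [Finset.mem_range, Nat.lt_succ_iff] at hj
    have h1 : ((n.toNat + 1 - 1 - j : ℕ) : ℤ) = n - j := by omega
    rw [h1, inv_zpow, ← zpow_neg]
    congr 1
    omega

lemma chiB_apply {n k : ℤ} (hn : 0 ≤ n) (hk : n ≤ k) :
    (chiB n).coeff k = if k = n then 1 else 0 := by
  unfold chiB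
  rw [if_neg (not_lt.2 hn), AddMonoidAlgebra.coeff_sum, Finsupp.finset_sum_apply]
  have hN : (n.toNat : ℤ) = n := Int.toNat_of_nonneg hn
  rw [Finset.sum_eq_single 0]
  · show (Finsupp.single (n - 2 * ((0:ℕ):ℤ)) (1:ℚ)) k = _
    simp only [Nat.cast_zero, mul_zero, sub_zero, Finsupp.single_apply]
    exact if_congr eq_comm rfl rfl
  · intro j hj hj0
    have h2 : n - 2 * (j : ℤ) ≠ k := by
      rw [Finset.mem_range] at hj; omega
    show (Finsupp.single (n - 2 * (j:ℤ)) (1:ℚ)) k = 0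
    rw [Finsupp.single_apply, if_neg h2]
  · intro h
    simp at h

lemma T_mul_C (a : ℤ) (r : LaurentPolynomial ℚ) : (T a * C r : A).coeff = Finsupp.single a r := by
  rw [← AddMonoidAlgebra.coeff_single, single_eq_C_mul_T, mul_comm]

lemma ImmL_eq (m : ℕ) : (ImmL m).coeff = Finsupp.single (m:ℤ) (chiB m)
    - Finsupp.single ((m:ℤ)+1) (chiB ((m:ℤ)-1)) := by
  unfold ImmL
  rw [mul_sub, AddMonoidAlgebra.coeff_sub, T_mul_C, ← mul_assoc, ← T_add, T_mul_C]

lemma ImnL_eq (m n : ℕ) : (ImnL m n).coeff = Finsupp.single (m:ℤ) (chiB n)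
    + Finsupp.single ((m:ℤ)+2) (chiB n)
    - Finsupp.single ((m:ℤ)+1) (chiB ((n:ℤ)+1) + chiB ((n:ℤ)-1)) := by
  unfold ImnL
  rw [mul_sub, add_mul, one_mul, mul_add, ← mul_assoc, ← mul_assoc, ← T_add, ← T_add,
    AddMonoidAlgebra.coeff_sub, AddMonoidAlgebra.coeff_add, T_mul_C, T_mul_C, T_mul_C]

lemma ImmL_apply_lt (m : ℕ) (a : ℤ) (ha : a < m) : (ImmL m).coeff a = 0 := by
  rw [ImmL_eq, Finsupp.sub_apply, Finsupp.single_apply, Finsupp.single_apply,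
    if_neg (by omega), if_neg (by omega), sub_zero]

lemma ImmL_apply_self (m : ℕ) : (ImmL m).coeff m = chiB m := by
  rw [ImmL_eq, Finsupp.sub_apply, Finsupp.single_apply, Finsupp.single_apply,
    if_pos rfl, if_neg (by omega), sub_zero]

lemma ImnL_apply_lt (m n : ℕ) (a : ℤ) (ha : a < m) : (ImnL m n).coeff a = 0 := by
  rw [ImnL_eq, Finsupp.sub_apply, Finsupp.add_apply, Finsupp.single_apply,
    Finsupp.single_apply, Finsupp.single_apply,
    if_neg (by omega), if_neg (by omega), if_neg (by omega)]
  simp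

lemma ImnL_apply_self (m n : ℕ) : (ImnL m n).coeff m = chiB n := by
  rw [ImnL_eq, Finsupp.sub_apply, Finsupp.add_apply, Finsupp.single_apply,
    Finsupp.single_apply, Finsupp.single_apply,
    if_pos rfl, if_neg (by omega), if_neg (by omega)]
  simp
/-- The characters `I_{m,m}` (for `m ≥ 0`) and `I_{m,n}` (for `m > n ≥ 0`)
are invariant under `y ↦ 1/y`, and the whole family is linearly independent
over `ℚ` in the ring of Laurent polynomials in `t` and `y`. -/
theorem characters_symmetric_and_linearly_independent :
    (∀ (K : Type) (_ : Field K) (t y : K), t ≠ 0 → y ≠ 0 →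
      (∀ m : ℕ, Imm m t y = Imm m t y⁻¹) ∧
      (∀ m n : ℕ, n < m → Imn m n t y = Imn m n t y⁻¹)) ∧
    LinearIndependent ℚ
      (fun p : {p : ℕ × ℕ // p.2 ≤ p.1} =>
        if p.1.1 = p.1.2 then ImmL p.1.1 else ImnL p.1.1 p.1.2) := by
  constructor
  · intro K hK t y _ _
    letI : Field K := hK
    constructor
    · intro m
      unfold Imm
      rw [chi_inv, chi_inv]
    · intro m n _
      unfold Imn
      rw [chi_inv, chi_inv, chi_inv]
  · set v : {p : ℕ × ℕ // p.2 ≤ p.1} → A :=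
      fun p => if p.1.1 = p.1.2 then ImmL p.1.1 else ImnL p.1.1 p.1.2 with hv
    have hv_lt : ∀ p, ∀ a : ℤ, a < p.1.1 → (v p).coeff a = 0 := by
      intro p a ha
      rw [hv]
      dsimp only
      split_ifs
      · exact ImmL_apply_lt _ _ ha
      · exact ImnL_apply_lt _ _ _ ha
    have hv_self : ∀ p, (v p).coeff (p.1.1 : ℤ) = chiB p.1.2 := by
      intro p
      rw [hv]
      dsimp only
      split_ifs with h
      · rw [ImmL_apply_self, h]
      · exact ImnL_apply_self _ _
    rw [linearIndependent_iff']
    intro s g hg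
    by_contra hc
    push_neg at hc
    obtain ⟨i₀, hi₀s, hi₀⟩ := hc
    set S := s.filter (fun i => g i ≠ 0) with hS
    have hSne : S.Nonempty := ⟨i₀, Finset.mem_filter.2 ⟨hi₀s, hi₀⟩⟩
    set M := S.image (fun p => p.1.1) with hM
    have hMne : M.Nonempty := hSne.image _
    set m₀ := M.min' hMne with hm₀
    set S₁ := S.filter (fun p => p.1.1 = m₀) with hS₁
    have hS₁ne : S₁.Nonempty := by
      obtain ⟨q, hq, hqe⟩ := Finset.mem_image.1 (M.min'_mem hMne)
      exact ⟨q, Finset.mem_filter.2 ⟨hq, hqe⟩⟩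
    set N := S₁.image (fun p => p.1.2) with hN
    have hNne : N.Nonempty := hS₁ne.image _
    set n₀ := N.max' hNne with hn₀
    obtain ⟨q, hqS₁, hqn⟩ := Finset.mem_image.1 (N.max'_mem hNne)
    have hqn2 : q.1.2 = n₀ := by rw [hn₀]; exact hqn
    have hqS : q ∈ S := (Finset.mem_filter.1 hqS₁).1
    have hqm : q.1.1 = m₀ := (Finset.mem_filter.1 hqS₁).2
    have hqs : q ∈ s := (Finset.mem_filter.1 hqS).1
    have hqg : g q ≠ 0 := (Finset.mem_filter.1 hqS).2
    have h0 : ((∑ i ∈ s, g i • v i).coeff (m₀ : ℤ)).coeff (n₀ : ℤ) = 0 := by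
      rw [hg]; rfl
    rw [AddMonoidAlgebra.coeff_sum, Finsupp.finset_sum_apply, AddMonoidAlgebra.coeff_sum,
      Finsupp.finset_sum_apply] at h0
    have hterm : ∀ i ∈ s, i ≠ q → ((g i • v i).coeff (m₀ : ℤ)).coeff (n₀ : ℤ) = 0 := by
      intro i his hiq
      by_cases hgi : g i = 0
      · simp [hgi]
      have hiS : i ∈ S := Finset.mem_filter.2 ⟨his, hgi⟩
      have hmle : m₀ ≤ i.1.1 := Finset.min'_le M _ (Finset.mem_image_of_mem _ hiS)
      rcases lt_or_eq_of_le hmle with hlt | heq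
      · rw [AddMonoidAlgebra.coeff_smul, Finsupp.smul_apply, hv_lt i _ (by exact_mod_cast hlt)]
        simp
      · have hiS₁ : i ∈ S₁ := Finset.mem_filter.2 ⟨hiS, heq.symm⟩
        have hnle : i.1.2 ≤ n₀ := Finset.le_max' N _ (Finset.mem_image_of_mem _ hiS₁)
        have hne : i.1.2 ≠ n₀ := by
          intro he
          apply hiq
          apply Subtype.ext
          have h3 : i.1 = (m₀, n₀) := Prod.ext heq.symm he
          rw [h3, ← hqm, ← hqn2]
        have h4 : (v i).coeff ((m₀ : ℕ) : ℤ) = chiB i.1.2 := by rw [heq]; exact hv_self i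
        rw [AddMonoidAlgebra.coeff_smul, Finsupp.smul_apply, h4, AddMonoidAlgebra.coeff_smul,
          Finsupp.smul_apply,
          chiB_apply (Int.natCast_nonneg _) (by exact_mod_cast hnle),
          if_neg (by intro h; exact hne (by exact_mod_cast h.symm))]
        simp
    rw [Finset.sum_eq_single_of_mem q hqs hterm] at h0
    have hvq : (v q).coeff ((m₀ : ℕ) : ℤ) = chiB q.1.2 := by rw [← hqm]; exact hv_self q
    rw [AddMonoidAlgebra.coeff_smul, Finsupp.smul_apply, hvq, hqn2,
      AddMonoidAlgebra.coeff_smul, Finsupp.smul_apply,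
      chiB_apply (Int.natCast_nonneg _) le_rfl, if_pos rfl] at h0
    simp only [smul_eq_mul, mul_one] at h0
    exact hqg h0
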